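/- arXiv:1708.02042 — 2 statements merged into one kernel-verified Lean document; each statement's English description precedes it below -/
import Mathlib

section
/- Let φ : ℝ^d → ℝ be Lipschitz with constant L. For a uniform grid x_i = iρ with Q₁ (multilinear) basis functions β_i forming a partition of unity supported near x_i, the interpolant I[φ](x) := Σ_i φ(x_i) β_i(x) is Lipschitz with constant at most √d · L. -/
namespace Stmt9Aux

noncomputable def hat (ρ t : ℝ) (n : ℤ) : ℝ := max (1 - |t - (n : ℝ) * ρ| / ρ) 0

lemma hat_nonneg {ρ t : ℝ} {n : ℤ} : 0 ≤ hat ρ t n := le_max_right _ _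

lemma hat_le_one {ρ t : ℝ} {n : ℤ} (hρ : 0 < ρ) : hat ρ t n ≤ 1 := by
  unfold hat
  have : 0 ≤ |t - (n:ℝ)*ρ| / ρ := by positivity
  exact max_le (by linarith) zero_le_one

lemma hat_eq_zero {ρ t : ℝ} {n : ℤ} (hρ : 0 < ρ) (h : ρ ≤ |t - (n : ℝ) * ρ|) :
    hat ρ t n = 0 := by
  unfold hat
  have : (1:ℝ) ≤ |t - (n:ℝ)*ρ| / ρ := (one_le_div hρ).2 h
  exact max_eq_right (by linarith)

lemma hat_left {ρ t : ℝ} {m : ℤ} (hρ : 0 < ρ)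
    (ht : t ∈ Set.Icc ((m : ℝ) * ρ) (((m : ℝ) + 1) * ρ)) :
    hat ρ t m = 1 - (t - (m : ℝ) * ρ) / ρ := by
  obtain ⟨h1, h2⟩ := ht
  unfold hat
  rw [abs_of_nonneg (by linarith)]
  refine max_eq_left ?_
  rw [sub_nonneg, div_le_one hρ]
  linarith

lemma hat_right {ρ t : ℝ} {m : ℤ} (hρ : 0 < ρ)
    (ht : t ∈ Set.Icc ((m : ℝ) * ρ) (((m : ℝ) + 1) * ρ)) :
    hat ρ t (m + 1) = (t - (m : ℝ) * ρ) / ρ := by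
  obtain ⟨h1, h2⟩ := ht
  unfold hat
  push_cast
  rw [abs_of_nonpos (by nlinarith)]
  have : -(t - ((m:ℝ)+1)*ρ) / ρ = 1 - (t - (m:ℝ)*ρ)/ρ := by
    field_simp; ring
  rw [this, sub_sub_cancel]
  refine max_eq_left ?_
  have : 0 ≤ (t - (m:ℝ)*ρ)/ρ := div_nonneg (by linarith) hρ.le
  linarith

lemma hat_out {ρ t : ℝ} {m n : ℤ} (hρ : 0 < ρ)
    (ht : t ∈ Set.Icc ((m : ℝ) * ρ) (((m : ℝ) + 1) * ρ))
    (h1 : n ≠ m) (h2 : n ≠ m + 1) : hat ρ t n = 0 := by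
  obtain ⟨hl, hr⟩ := ht
  refine hat_eq_zero hρ ?_
  rcases lt_or_gt_of_ne h1 with h | h
  · have hn : (n : ℝ) ≤ (m : ℝ) - 1 := by exact_mod_cast Int.le_sub_one_of_lt h
    have : ρ ≤ t - (n:ℝ)*ρ := by nlinarith
    calc ρ ≤ t - (n:ℝ)*ρ := this
      _ ≤ |t - (n:ℝ)*ρ| := le_abs_self _
  · have hn : (m : ℝ) + 2 ≤ (n : ℝ) := by exact_mod_cast (by omega : m + 2 ≤ n)
    have : ρ ≤ (n:ℝ)*ρ - t := by nlinarith
    calc ρ ≤ (n:ℝ)*ρ - t := this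
      _ ≤ |t - (n:ℝ)*ρ| := by rw [abs_sub_comm]; exact le_abs_self _


variable {d : ℕ}

noncomputable def corner (ρ : ℝ) (i : Fin d → ℤ) : EuclideanSpace ℝ (Fin d) :=
  WithLp.toLp 2 (fun k => (i k : ℝ) * ρ)

def cι (n : Fin d → ℤ) (ε : Fin d → Bool) : Fin d → ℤ :=
  fun k => n k + (if ε k then 1 else 0)

lemma cι_inj (n : Fin d → ℤ) : Function.Injective (cι n) := by
  intro ε ε' h
  funext k
  have := congrFun h k
  unfold cι at this
  cases hε : ε k <;> cases hε' : ε' k <;> simp_all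

lemma interp_eq {ρ : ℝ} (hρ : 0 < ρ)
    (φ : EuclideanSpace ℝ (Fin d) → ℝ)
    (β : (Fin d → ℤ) → EuclideanSpace ℝ (Fin d) → ℝ)
    (hβ : ∀ i x, β i x = ∏ k : Fin d, max (1 - |x k - (i k : ℝ) * ρ| / ρ) 0)
    (I : EuclideanSpace ℝ (Fin d) → ℝ)
    (hI : ∀ x, I x = ∑' i : Fin d → ℤ, φ (WithLp.toLp 2 (fun k => (i k : ℝ) * ρ)) * β i x)
    (n : Fin d → ℤ) (x : EuclideanSpace ℝ (Fin d))
    (hx : ∀ k, x k ∈ Set.Icc ((n k : ℝ) * ρ) (((n k : ℝ) + 1) * ρ)) :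
    I x = ∑ ε : Fin d → Bool,
      φ (corner ρ (cι n ε)) * ∏ k : Fin d, hat ρ (x k) (cι n ε k) := by
  rw [hI x]
  have hterm : ∀ i : Fin d → ℤ,
      φ (WithLp.toLp 2 (fun k => (i k : ℝ) * ρ)) * β i x = φ (corner ρ i) * ∏ k, hat ρ (x k) (i k) := by
    intro i; rw [hβ]; rfl
  have hzero : ∀ i ∉ Finset.image (cι n) Finset.univ,
      φ (WithLp.toLp 2 (fun k => (i k : ℝ) * ρ)) * β i x = 0 := by
    intro i hi
    have : ∃ k, i k ≠ n k ∧ i k ≠ n k + 1 := by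
      by_contra hc
      push_neg at hc
      apply hi
      refine Finset.mem_image.2 ⟨fun k => decide (i k = n k + 1), Finset.mem_univ _, ?_⟩
      funext k
      by_cases h : i k = n k + 1
      · unfold cι; simp [h]
      · have h2 : i k = n k := by by_contra h3; exact h (hc k h3)
        unfold cι; simp [h, h2]
    obtain ⟨k, h1, h2⟩ := this
    rw [hterm i]
    have : hat ρ (x k) (i k) = 0 := hat_out hρ (hx k) h1 h2
    rw [Finset.prod_eq_zero (Finset.mem_univ k) this, mul_zero]
  rw [tsum_eq_sum hzero, Finset.sum_image (fun a _ b _ h => cι_inj n h)]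
  exact Finset.sum_congr rfl fun ε _ => hterm (cι n ε)


lemma cell_lip {ρ L : ℝ} (hρ : 0 < ρ) (hL : 0 ≤ L)
    (φ : EuclideanSpace ℝ (Fin d) → ℝ)
    (hφ : ∀ x y : EuclideanSpace ℝ (Fin d), |φ x - φ y| ≤ L * ‖x - y‖)
    (β : (Fin d → ℤ) → EuclideanSpace ℝ (Fin d) → ℝ)
    (hβ : ∀ i x, β i x = ∏ k : Fin d, max (1 - |x k - (i k : ℝ) * ρ| / ρ) 0)
    (I : EuclideanSpace ℝ (Fin d) → ℝ)
    (hI : ∀ x, I x = ∑' i : Fin d → ℤ, φ (WithLp.toLp 2 (fun k => (i k : ℝ) * ρ)) * β i x)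
    (n : Fin d → ℤ) (k : Fin d) (x : EuclideanSpace ℝ (Fin d))
    (hx : ∀ j, j ≠ k → x j ∈ Set.Icc ((n j : ℝ) * ρ) (((n j : ℝ) + 1) * ρ))
    {t u : ℝ}
    (ht : t ∈ Set.Icc ((n k : ℝ) * ρ) (((n k : ℝ) + 1) * ρ))
    (hu : u ∈ Set.Icc ((n k : ℝ) * ρ) (((n k : ℝ) + 1) * ρ)) :
    |I (WithLp.toLp 2 (Function.update x k t)) - I (WithLp.toLp 2 (Function.update x k u))| ≤ L * |t - u| := by
  classical
  have hxs : ∀ s : ℝ, s ∈ Set.Icc ((n k : ℝ) * ρ) (((n k : ℝ) + 1) * ρ) →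
      ∀ j, (WithLp.toLp 2 (Function.update x k s) : EuclideanSpace ℝ (Fin d)) j ∈
        Set.Icc ((n j : ℝ) * ρ) (((n j : ℝ) + 1) * ρ) := by
    intro s hs j
    by_cases hj : j = k
    · subst hj; simpa [Function.update_self] using hs
    · simpa [Function.update_of_ne hj] using hx j hj
  rw [interp_eq hρ φ β hβ I hI n _ (hxs t ht), interp_eq hρ φ β hβ I hI n _ (hxs u hu),
    ← Finset.sum_sub_distrib]
  have hprod : ∀ (s : ℝ) (ε : Fin d → Bool),
      (∏ j : Fin d, hat ρ ((WithLp.toLp 2 (Function.update x k s) : EuclideanSpace ℝ (Fin d)) j) (cι n ε j))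
      = hat ρ s (cι n ε k) * ∏ j ∈ Finset.univ.erase k, hat ρ (x j) (cι n ε j) := by
    intro s ε
    simp only [WithLp.ofLp_toLp]
    rw [← Finset.mul_prod_erase Finset.univ _ (Finset.mem_univ k)]
    congr 1
    · rw [Function.update_self]
    · exact Finset.prod_congr rfl fun j hj => by
        rw [Function.update_of_ne (Finset.ne_of_mem_erase hj)]
  have hdiff : ∀ ε : Fin d → Bool,
      hat ρ t (cι n ε k) - hat ρ u (cι n ε k) = (if ε k then 1 else -1) * ((t - u) / ρ) := by
    intro ε
    unfold cι
    cases hek : ε k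
    · norm_num
      rw [hat_left hρ ht, hat_left hρ hu]
      ring
    · norm_num
      rw [hat_right hρ ht, hat_right hρ hu]
      ring
  have key : ∀ ε : Fin d → Bool,
      φ (corner ρ (cι n ε)) * ∏ j : Fin d,
          hat ρ ((WithLp.toLp 2 (Function.update x k t) : EuclideanSpace ℝ (Fin d)) j) (cι n ε j)
      - φ (corner ρ (cι n ε)) * ∏ j : Fin d,
          hat ρ ((WithLp.toLp 2 (Function.update x k u) : EuclideanSpace ℝ (Fin d)) j) (cι n ε j)
      = ((t - u) / ρ) * ((if ε k then 1 else -1) * φ (corner ρ (cι n ε)) *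
          ∏ j ∈ Finset.univ.erase k, hat ρ (x j) (cι n ε j)) := by
    intro ε
    rw [hprod t ε, hprod u ε]
    have := hdiff ε
    linear_combination (φ (corner ρ (cι n ε)) *
      ∏ j ∈ Finset.univ.erase k, hat ρ (x j) (cι n ε j)) * this
  rw [Finset.sum_congr rfl fun ε _ => key ε, ← Finset.mul_sum, abs_mul]
  -- now bound the inner sum by L * ρ
  set e := Equiv.funSplitAt k Bool with he
  have hsymmk : ∀ (b : Bool) (η : {j // j ≠ k} → Bool), e.symm (b, η) k = b := by
    intro b η
    simp [he, Equiv.funSplitAt_symm_apply]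
  have hsymmj : ∀ (b : Bool) (η : {j // j ≠ k} → Bool) (j : Fin d) (hj : j ≠ k),
      e.symm (b, η) j = η ⟨j, hj⟩ := by
    intro b η j hj
    simp [he, Equiv.funSplitAt_symm_apply, hj]
  set C : ({j // j ≠ k} → Bool) → ℝ := fun η =>
    ∏ j ∈ Finset.univ.erase k, hat ρ (x j) (cι n (e.symm (false, η)) j) with hC
  have hCeq : ∀ (b : Bool) (η : {j // j ≠ k} → Bool),
      ∏ j ∈ Finset.univ.erase k, hat ρ (x j) (cι n (e.symm (b, η)) j) = C η := by
    intro b η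
    refine Finset.prod_congr rfl fun j hj => ?_
    have hj' : j ≠ k := Finset.ne_of_mem_erase hj
    unfold cι
    rw [hsymmj b η j hj', hsymmj false η j hj']
  have hCnonneg : ∀ η, 0 ≤ C η := fun η =>
    Finset.prod_nonneg fun j _ => hat_nonneg
  have hsplit : (∑ ε : Fin d → Bool, (if ε k then 1 else -1) * φ (corner ρ (cι n ε)) *
        ∏ j ∈ Finset.univ.erase k, hat ρ (x j) (cι n ε j))
      = ∑ η : {j // j ≠ k} → Bool,
          (φ (corner ρ (cι n (e.symm (true, η)))) - φ (corner ρ (cι n (e.symm (false, η))))) * C η := by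
    rw [← Equiv.sum_comp e.symm, Fintype.sum_prod_type]
    rw [show (Finset.univ : Finset Bool) = {true, false} by rfl]
    rw [Finset.sum_insert (by simp), Finset.sum_singleton, ← Finset.sum_add_distrib]
    refine Finset.sum_congr rfl fun η _ => ?_
    rw [hCeq true η, hCeq false η, hsymmk true η, hsymmk false η]
    norm_num
    ring
  rw [hsplit]
  have hφd : ∀ η : {j // j ≠ k} → Bool,
      |φ (corner ρ (cι n (e.symm (true, η)))) - φ (corner ρ (cι n (e.symm (false, η))))| ≤ L * ρ := by
    intro η
    have hnorm : ‖(corner ρ (cι n (e.symm (true, η))) : EuclideanSpace ℝ (Fin d))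
        - corner ρ (cι n (e.symm (false, η)))‖ = ρ := by
      rw [EuclideanSpace.norm_eq]
      have hsum : ∑ j : Fin d, ‖(corner ρ (cι n (e.symm (true, η)))
          - corner ρ (cι n (e.symm (false, η)))) j‖ ^ 2 = ρ ^ 2 := by
        rw [Finset.sum_eq_single k]
        · have h1 : cι n (e.symm (true, η)) k = n k + 1 := by
            unfold cι; rw [hsymmk]; norm_num
          have h2 : cι n (e.symm (false, η)) k = n k := by
            unfold cι; rw [hsymmk]; norm_num
          simp only [PiLp.sub_apply, corner, h1, h2, Real.norm_eq_abs, sq_abs]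
          push_cast
          ring
        · intro j _ hj
          have hee : cι n (e.symm (true, η)) j = cι n (e.symm (false, η)) j := by
            unfold cι; rw [hsymmj true η j hj, hsymmj false η j hj]
          simp [PiLp.sub_apply, corner, hee]
        · intro h; exact absurd (Finset.mem_univ k) h
      rw [hsum, Real.sqrt_sq hρ.le]
    calc |φ (corner ρ (cι n (e.symm (true, η)))) - φ (corner ρ (cι n (e.symm (false, η))))|
        ≤ L * ‖(corner ρ (cι n (e.symm (true, η))) : EuclideanSpace ℝ (Fin d))
            - corner ρ (cι n (e.symm (false, η)))‖ := hφ _ _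
      _ = L * ρ := by rw [hnorm]
  have hsum1 : ∑ η : {j // j ≠ k} → Bool, C η = 1 := by
    have hCform : ∀ η : {j // j ≠ k} → Bool, C η =
        ∏ j : {j // j ≠ k}, hat ρ (x j.1) (n j.1 + if η j then 1 else 0) := by
      intro η
      have hCdef : C η = ∏ j ∈ Finset.univ.erase k,
          hat ρ (x j) (cι n (e.symm (false, η)) j) := rfl
      rw [hCdef, Finset.prod_subtype (p := fun j => j ≠ k) (Finset.univ.erase k)
        (fun j => by simp [Finset.mem_erase])
        (fun j => hat ρ (x j) (cι n (e.symm (false, η)) j))]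
      refine Finset.prod_congr rfl fun j _ => ?_
      unfold cι
      rw [hsymmj false η j.1 j.2]
    have hgs : ∀ j : {j // j ≠ k},
        ∑ b : Bool, hat ρ (x j.1) (n j.1 + if b then 1 else 0) = 1 := by
      intro j
      rw [show (Finset.univ : Finset Bool) = {true, false} from rfl,
        Finset.sum_insert (by simp), Finset.sum_singleton]
      norm_num
      rw [hat_right hρ (hx j.1 j.2), hat_left hρ (hx j.1 j.2)]
      ring
    have hps := Fintype.prod_sum
      (fun (j : {j // j ≠ k}) (b : Bool) => hat ρ (x j.1) (n j.1 + if b then 1 else 0))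
    rw [Finset.prod_congr rfl (fun j _ => hgs j), Finset.prod_const_one] at hps
    rw [Finset.sum_congr rfl fun η _ => hCform η]
    exact hps.symm
  have hSbound : |∑ η : {j // j ≠ k} → Bool,
      (φ (corner ρ (cι n (e.symm (true, η)))) - φ (corner ρ (cι n (e.symm (false, η))))) * C η|
      ≤ L * ρ := by
    calc |∑ η : {j // j ≠ k} → Bool,
        (φ (corner ρ (cι n (e.symm (true, η)))) - φ (corner ρ (cι n (e.symm (false, η))))) * C η|
        ≤ ∑ η : {j // j ≠ k} → Bool,
          |(φ (corner ρ (cι n (e.symm (true, η)))) - φ (corner ρ (cι n (e.symm (false, η))))) * C η| :=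
            Finset.abs_sum_le_sum_abs _ _
      _ ≤ ∑ η : {j // j ≠ k} → Bool, (L * ρ) * C η := by
          refine Finset.sum_le_sum fun η _ => ?_
          rw [abs_mul, abs_of_nonneg (hCnonneg η)]
          exact mul_le_mul_of_nonneg_right (hφd η) (hCnonneg η)
      _ = (L * ρ) * ∑ η : {j // j ≠ k} → Bool, C η := (Finset.mul_sum _ _ _).symm
      _ = L * ρ := by rw [hsum1, mul_one]
  calc |(t - u) / ρ| * |∑ η : {j // j ≠ k} → Bool,
      (φ (corner ρ (cι n (e.symm (true, η)))) - φ (corner ρ (cι n (e.symm (false, η))))) * C η|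
      ≤ |(t - u) / ρ| * (L * ρ) := mul_le_mul_of_nonneg_left hSbound (abs_nonneg _)
    _ = L * |t - u| := by
        rw [abs_div, abs_of_pos hρ]
        field_simp


lemma glue_1d {ρ L : ℝ} (hρ : 0 < ρ) (hL : 0 ≤ L) (g : ℝ → ℝ)
    (H : ∀ (m : ℤ) (t u : ℝ), t ∈ Set.Icc ((m : ℝ) * ρ) (((m : ℝ) + 1) * ρ) →
      u ∈ Set.Icc ((m : ℝ) * ρ) (((m : ℝ) + 1) * ρ) → |g t - g u| ≤ L * |t - u|) :
    ∀ t u : ℝ, |g t - g u| ≤ L * |t - u| := by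
  have hmem : ∀ s : ℝ, s ∈ Set.Icc ((⌊s / ρ⌋ : ℝ) * ρ) (((⌊s / ρ⌋ : ℝ) + 1) * ρ) := by
    intro s
    constructor
    · exact (le_div_iff₀ hρ).1 (Int.floor_le (s / ρ))
    · exact le_of_lt ((div_lt_iff₀ hρ).1 (Int.lt_floor_add_one (s / ρ)))
  have main : ∀ N : ℕ, ∀ t u : ℝ, t ≤ u → ⌊u / ρ⌋ ≤ ⌊t / ρ⌋ + N →
      |g t - g u| ≤ L * (u - t) := by
    intro N
    induction N with
    | zero =>
      intro t u htu hfl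
      have h1 : ⌊t / ρ⌋ ≤ ⌊u / ρ⌋ := Int.floor_le_floor (by gcongr)
      have heq : ⌊u / ρ⌋ = ⌊t / ρ⌋ := by omega
      have hu' := hmem u
      rw [heq] at hu'
      have := H ⌊t / ρ⌋ t u (hmem t) hu'
      rwa [abs_sub_comm t u, abs_of_nonneg (show (0:ℝ) ≤ u - t by linarith)] at this
    | succ N ih =>
      intro t u htu hfl
      by_cases hcase : ⌊u / ρ⌋ ≤ ⌊t / ρ⌋ + N
      · exact ih t u htu hcase
      · set m := ⌊t / ρ⌋ with hm
        have hmu : m + 1 ≤ ⌊u / ρ⌋ := by omega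
        set v := ((m : ℝ) + 1) * ρ with hv
        have htv : t ≤ v := (hmem t).2
        have hvu : v ≤ u := by
          have h2 : ((m : ℝ) + 1) ≤ u / ρ := by
            calc ((m : ℝ) + 1) ≤ (⌊u / ρ⌋ : ℝ) := by exact_mod_cast hmu
              _ ≤ u / ρ := Int.floor_le _
          calc v = ((m : ℝ) + 1) * ρ := rfl
            _ ≤ (u / ρ) * ρ := by nlinarith
            _ = u := by field_simp
        have hmv : ⌊v / ρ⌋ = m + 1 := by
          rw [hv, mul_div_cancel_right₀ _ (ne_of_gt hρ)]
          exact_mod_cast Int.floor_intCast (R := ℝ) (m + 1)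
        have h1 : |g t - g v| ≤ L * (v - t) := by
          have hvc : v ∈ Set.Icc ((m : ℝ) * ρ) (((m : ℝ) + 1) * ρ) :=
            ⟨by nlinarith, le_refl _⟩
          have := H m t v (hmem t) hvc
          rwa [abs_sub_comm t v, abs_of_nonneg (show (0:ℝ) ≤ v - t by linarith)] at this
        have h2 : |g v - g u| ≤ L * (u - v) := by
          refine ih v u hvu ?_
          rw [hmv]; omega
        calc |g t - g u| ≤ |g t - g v| + |g v - g u| := abs_sub_le _ _ _
          _ ≤ L * (v - t) + L * (u - v) := add_le_add h1 h2
          _ = L * (u - t) := by ring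
  intro t u
  rcases le_total t u with h | h
  · have := main (⌊u / ρ⌋ - ⌊t / ρ⌋).toNat t u h (by omega)
    rwa [abs_sub_comm t u, abs_of_nonneg (show (0:ℝ) ≤ u - t by linarith)]
  · have := main (⌊t / ρ⌋ - ⌊u / ρ⌋).toNat u t h (by omega)
    rw [abs_of_nonneg (show (0:ℝ) ≤ t - u by linarith)]
    rwa [abs_sub_comm (g u) (g t)] at this

lemma coord_lip {ρ L : ℝ} (hρ : 0 < ρ) (hL : 0 ≤ L)
    (φ : EuclideanSpace ℝ (Fin d) → ℝ)
    (hφ : ∀ x y : EuclideanSpace ℝ (Fin d), |φ x - φ y| ≤ L * ‖x - y‖)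
    (β : (Fin d → ℤ) → EuclideanSpace ℝ (Fin d) → ℝ)
    (hβ : ∀ i x, β i x = ∏ k : Fin d, max (1 - |x k - (i k : ℝ) * ρ| / ρ) 0)
    (I : EuclideanSpace ℝ (Fin d) → ℝ)
    (hI : ∀ x, I x = ∑' i : Fin d → ℤ, φ (WithLp.toLp 2 (fun k => (i k : ℝ) * ρ)) * β i x)
    (x : EuclideanSpace ℝ (Fin d)) (k : Fin d) (a b : ℝ) :
    |I (WithLp.toLp 2 (Function.update x k a)) - I (WithLp.toLp 2 (Function.update x k b))| ≤ L * |a - b| := by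
  refine glue_1d hρ hL (fun t => I (WithLp.toLp 2 (Function.update x k t))) ?_ a b
  intro m t u ht hu
  refine cell_lip hρ hL φ hφ β hβ I hI (fun j => if j = k then m else ⌊x j / ρ⌋) k x ?_ ?_ ?_
  · intro j hj
    simp only [if_neg hj]
    constructor
    · exact (le_div_iff₀ hρ).1 (Int.floor_le (x j / ρ))
    · exact le_of_lt ((div_lt_iff₀ hρ).1 (Int.lt_floor_add_one (x j / ρ)))
  · simpa using ht
  · simpa using hu

end Stmt9Aux

/-- The multilinear (Q₁) grid interpolant of an `L`-Lipschitz function `φ` on the uniform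
grid of mesh `ρ` in `ℝ^d` is Lipschitz with constant `√d · L`. -/
theorem stmt9 (d : ℕ) (ρ L : ℝ) (hρ : 0 < ρ) (hL : 0 ≤ L)
    (φ : EuclideanSpace ℝ (Fin d) → ℝ)
    (hφ : ∀ x y : EuclideanSpace ℝ (Fin d), |φ x - φ y| ≤ L * ‖x - y‖)
    (β : (Fin d → ℤ) → EuclideanSpace ℝ (Fin d) → ℝ)
    (hβ : ∀ i x, β i x = ∏ k : Fin d, max (1 - |x k - (i k : ℝ) * ρ| / ρ) 0)
    (I : EuclideanSpace ℝ (Fin d) → ℝ)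
    (hI : ∀ x, I x = ∑' i : Fin d → ℤ,
      φ (WithLp.toLp 2 (fun k => (i k : ℝ) * ρ)) * β i x) :
    ∀ x y : EuclideanSpace ℝ (Fin d), |I x - I y| ≤ Real.sqrt d * L * ‖x - y‖ := by
  classical
  intro x y
  have coord := Stmt9Aux.coord_lip hρ hL φ hφ β hβ I hI
  -- telescoping sequence
  set z : ℕ → EuclideanSpace ℝ (Fin d) :=
    fun j => WithLp.toLp 2 (fun k : Fin d => if (k : ℕ) < j then y k else x k) with hz
  have hzval : ∀ (j : ℕ) (k : Fin d), z j k = if (k : ℕ) < j then y k else x k :=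
    fun j k => rfl
  have hz0 : z 0 = x := PiLp.ext fun k => by rw [hzval]; simp
  have hzd : z d = y := PiLp.ext fun k => by rw [hzval]; simp [k.isLt]
  -- ℕ-indexed coordinate difference
  set w : ℕ → ℝ := fun j => if h : j < d then |x ⟨j, h⟩ - y ⟨j, h⟩| else 0 with hw
  have hstep : ∀ j ∈ Finset.range d, dist (I (z j)) (I (z (j + 1))) ≤ L * w j := by
    intro j hj
    have hjd : j < d := Finset.mem_range.1 hj
    set k : Fin d := ⟨j, hjd⟩ with hk
    have h1 : z j = WithLp.toLp 2 (Function.update (z j) k (x k)) := by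
      have hxk : x k = z j k := by rw [hzval]; simp [hk]
      rw [hxk, Function.update_eq_self]
    have h2 : z (j + 1) = WithLp.toLp 2 (Function.update (z j) k (y k)) := by
      refine PiLp.ext fun l => ?_
      by_cases hl : l = k
      · subst hl
        rw [WithLp.ofLp_toLp 2 (Function.update (z j) k (y k)), Function.update_self, hzval]
        simp [hk]
      · rw [WithLp.ofLp_toLp 2 (Function.update (z j) k (y k)), Function.update_of_ne hl, hzval, hzval]
        have hlk : (l : ℕ) ≠ j := fun hc => hl (by rw [hk]; exact Fin.ext hc)
        exact if_congr (by omega) rfl rfl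
    rw [Real.dist_eq, h2]
    nth_rewrite 1 [h1]
    have := coord (z j) k (x k) (y k)
    rw [hw]
    simpa [hjd, hk] using this
  have tele : |I x - I y| ≤ ∑ j ∈ Finset.range d, L * w j := by
    calc |I x - I y| = dist (I (z 0)) (I (z d)) := by rw [hz0, hzd, Real.dist_eq]
      _ ≤ ∑ j ∈ Finset.range d, dist (I (z j)) (I (z (j + 1))) :=
          dist_le_range_sum_dist (fun j => I (z j)) d
      _ ≤ ∑ j ∈ Finset.range d, L * w j := Finset.sum_le_sum hstep
  have hsumw : ∑ j ∈ Finset.range d, L * w j = L * ∑ k : Fin d, |x k - y k| := by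
    rw [← Fin.sum_univ_eq_sum_range (fun j => L * w j) d, ← Finset.mul_sum]
    congr 1
    refine Finset.sum_congr rfl fun k _ => ?_
    simp [hw, k.isLt]
  -- Cauchy–Schwarz: ℓ¹ ≤ √d · ℓ²
  have hnorm : ‖x - y‖ = Real.sqrt (∑ k : Fin d, |x k - y k| ^ 2) := by
    rw [EuclideanSpace.norm_eq]
    refine congrArg Real.sqrt (Finset.sum_congr rfl fun k _ => ?_)
    simp [PiLp.sub_apply, Real.norm_eq_abs]
  have hCS : ∑ k : Fin d, |x k - y k| ≤ Real.sqrt d * ‖x - y‖ := by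
    have h1 : (∑ k : Fin d, |x k - y k|) ^ 2 ≤
        (d : ℝ) * ∑ k : Fin d, |x k - y k| ^ 2 := by
      have := sq_sum_le_card_mul_sum_sq
        (s := (Finset.univ : Finset (Fin d))) (f := fun k => |x k - y k|)
      simpa [Finset.card_univ] using this
    have hS : 0 ≤ ∑ k : Fin d, |x k - y k| :=
      Finset.sum_nonneg fun k _ => abs_nonneg _
    calc ∑ k : Fin d, |x k - y k|
        = Real.sqrt ((∑ k : Fin d, |x k - y k|) ^ 2) := (Real.sqrt_sq hS).symm
      _ ≤ Real.sqrt ((d : ℝ) * ∑ k : Fin d, |x k - y k| ^ 2) := Real.sqrt_le_sqrt h1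
      _ = Real.sqrt d * Real.sqrt (∑ k : Fin d, |x k - y k| ^ 2) :=
          Real.sqrt_mul (Nat.cast_nonneg d) _
      _ = Real.sqrt d * ‖x - y‖ := by rw [hnorm]
  calc |I x - I y| ≤ L * ∑ k : Fin d, |x k - y k| := by rw [← hsumw]; exact tele
    _ ≤ L * (Real.sqrt d * ‖x - y‖) := mul_le_mul_of_nonneg_left hCS hL
    _ = Real.sqrt d * L * ‖x - y‖ := by ring
end

section
/- Let v^n : ℝ^d → ℝ be a sequence of differentiable functions converging locally uniformly to a differentiable function v, all uniformly Lipschitz with constant L, and satisfying the weak semiconcavity property (∇v^n(y) − ∇v^n(x))·(y−x) ≤ c(|y−x|² + η_n²) for all x, y, where η_n → 0 and c > 0 is independent of n. If v satisfies v(y) ≤ v(x) + ∇v(x)·(y−x) + (c/2)|y−x|² for all x,y, then ∇v^n converges to ∇v uniformly on compact subsets of ℝ^d. -/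
open Filter
open scoped RealInnerProductSpace


lemma auxGrad {d : ℕ} (f : EuclideanSpace ℝ (Fin d) → ℝ) (hf : Differentiable ℝ f)
    (x w : EuclideanSpace ℝ (Fin d)) (s : ℝ) :
    HasDerivAt (fun s : ℝ => f (x + s • w)) ⟪gradient f (x + s • w), w⟫ s := by
  have h1 : HasFDerivAt f ((InnerProductSpace.toDualMap ℝ _) (gradient f (x + s • w))) (x + s • w) :=
    (hf (x + s • w)).hasGradientAt.hasFDerivAt
  have h2 : HasDerivAt (fun s : ℝ => x + s • w) w s := by
    simpa using ((hasDerivAt_id s).smul_const w).const_add x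
  simpa [Function.comp_def] using h1.comp_hasDerivAt s h2

lemma auxA {d : ℕ} {L c : ℝ} (hc : 0 < c) (hL : 0 ≤ L)
    (f : EuclideanSpace ℝ (Fin d) → ℝ) (hf : Differentiable ℝ f)
    (hfL : ∀ z, ‖gradient f z‖ ≤ L) (e : ℝ)
    (hsc : ∀ y z : EuclideanSpace ℝ (Fin d),
      ⟪gradient f z - gradient f y, z - y⟫ ≤ c * (‖z - y‖ ^ 2 + e ^ 2))
    (x w : EuclideanSpace ℝ (Fin d)) (hw : ‖w‖ ≤ 1) :
    f (x + w) ≤ f x + ⟪gradient f x, w⟫ + (c / 2) * ‖w‖ ^ 2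
      + 2 * Real.sqrt (2 * L * c) * |e| := by
  set g : ℝ → ℝ := fun s => f (x + s • w) with hg
  have hder : ∀ s : ℝ, HasDerivAt g ⟪gradient f (x + s • w), w⟫ s := auxGrad f hf x w
  set G : ℝ → ℝ := fun s => ⟪gradient f (x + s • w), w⟫ with hG
  have hGderiv : G = deriv g := by
    funext s; exact ((hder s).deriv).symm
  have hGmeas : Measurable G := hGderiv ▸ measurable_deriv g
  have hGbound : ∀ s : ℝ, |G s| ≤ L * ‖w‖ := by
    intro s
    calc |G s| ≤ ‖gradient f (x + s • w)‖ * ‖w‖ := abs_real_inner_le_norm _ _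
    _ ≤ L * ‖w‖ := by gcongr; exact hfL _
  have hGint : IntervalIntegrable G MeasureTheory.volume 0 1 := by
    rw [intervalIntegrable_iff]
    refine MeasureTheory.Integrable.mono' (MeasureTheory.integrableOn_const ?_)
      hGmeas.aestronglyMeasurable (MeasureTheory.ae_of_all _ fun s => (Real.norm_eq_abs _).le.trans (hGbound s))
    simp [Set.uIoc]
  have hFTC : ∫ s in (0:ℝ)..1, G s = g 1 - g 0 :=
    intervalIntegral.integral_eq_sub_of_hasDerivAt (fun s _ => hder s) hGint
  -- the comparison function
  set B : ℝ → ℝ := fun s => c * s * ‖w‖ ^ 2 + Real.sqrt (2 * L * c) * |e| * s ^ (-(1/2) : ℝ)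
    with hB
  have hBint : IntervalIntegrable B MeasureTheory.volume 0 1 := by
    apply IntervalIntegrable.add
    · exact (Continuous.intervalIntegrable (by fun_prop) 0 1)
    · exact (intervalIntegral.intervalIntegrable_rpow' (by norm_num)).const_mul _
  have hpt : ∀ s ∈ Set.Icc (0:ℝ) 1, G s - ⟪gradient f x, w⟫ ≤ B s := by
    intro s hs
    rcases eq_or_lt_of_le hs.1 with hs0 | hs0
    · rw [← hs0]
      simp [hG, hB, Real.zero_rpow (by norm_num : (-(1/2):ℝ) ≠ 0)]
    · -- s > 0
      have hD : G s - ⟪gradient f x, w⟫ = ⟪gradient f (x + s • w) - gradient f x, w⟫ := by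
        rw [inner_sub_left]
      have hA2 : G s - ⟪gradient f x, w⟫ ≤ 2 * L * ‖w‖ := by
        rw [hD]
        calc ⟪gradient f (x + s • w) - gradient f x, w⟫
            ≤ ‖gradient f (x + s • w) - gradient f x‖ * ‖w‖ := real_inner_le_norm _ _
          _ ≤ (L + L) * ‖w‖ := by
              gcongr
              exact (norm_sub_le _ _).trans (add_le_add (hfL _) (hfL _))
          _ = 2 * L * ‖w‖ := by ring
      have hB2 : G s - ⟪gradient f x, w⟫ ≤ c * s * ‖w‖ ^ 2 + c * e ^ 2 / s := by
        have h := hsc x (x + s • w)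
        rw [add_sub_cancel_left, real_inner_smul_right, norm_smul, Real.norm_eq_abs,
          abs_of_pos hs0] at h
        rw [hD]
        rw [← sub_nonneg] at h ⊢
        have : c * s * ‖w‖ ^ 2 + c * e ^ 2 / s - ⟪gradient f (x + s • w) - gradient f x, w⟫
            = (c * ((s * ‖w‖) ^ 2 + e ^ 2) - s * ⟪gradient f (x + s • w) - gradient f x, w⟫) / s
            := by field_simp
        rw [this]
        positivity
      have hmin : min (2 * L * ‖w‖) (c * e ^ 2 / s) ≤
          Real.sqrt (2 * L * c) * |e| * s ^ (-(1/2) : ℝ) := by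
        have hm0 : 0 ≤ min (2 * L * ‖w‖) (c * e ^ 2 / s) :=
          le_min (by positivity) (by positivity)
        have hsq : (min (2 * L * ‖w‖) (c * e ^ 2 / s)) ^ 2 ≤ (2 * L * c) * e ^ 2 / s := by
          calc (min (2 * L * ‖w‖) (c * e ^ 2 / s)) ^ 2
              ≤ (2 * L * ‖w‖) * (c * e ^ 2 / s) := by
                rw [sq]
                exact mul_le_mul (min_le_left _ _) (min_le_right _ _) hm0 (by positivity)
            _ ≤ (2 * L * c) * e ^ 2 / s := by
                rw [show (2 * L * ‖w‖) * (c * e ^ 2 / s) = (2 * L * c * e ^ 2 / s) * ‖w‖ by ring]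
                exact mul_le_of_le_one_right (by positivity) hw
        have h1 : min (2 * L * ‖w‖) (c * e ^ 2 / s) ≤ Real.sqrt ((2 * L * c) * e ^ 2 / s) := by
          rw [show min (2 * L * ‖w‖) (c * e ^ 2 / s)
              = Real.sqrt ((min (2 * L * ‖w‖) (c * e ^ 2 / s)) ^ 2) by
            rw [Real.sqrt_sq hm0]]
          exact Real.sqrt_le_sqrt hsq
        refine h1.trans (le_of_eq ?_)
        have hs12 : s ^ (-(1/2) : ℝ) = (Real.sqrt s)⁻¹ := by
          rw [Real.rpow_neg hs0.le, ← Real.sqrt_eq_rpow]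
        rw [hs12, show (2 * L * c) * e ^ 2 / s = (2 * L * c) * (e ^ 2 * s⁻¹) by ring,
          Real.sqrt_mul (by positivity), Real.sqrt_mul (sq_nonneg e),
          Real.sqrt_sq_eq_abs, Real.sqrt_inv]
        ring
      rcases le_total (2 * L * ‖w‖) (c * e ^ 2 / s) with hle | hle
      · have : G s - ⟪gradient f x, w⟫ ≤ c * s * ‖w‖ ^ 2 + min (2 * L * ‖w‖) (c * e ^ 2 / s) := by
          rw [min_eq_left hle]
          have : (0:ℝ) ≤ c * s * ‖w‖ ^ 2 := by positivity
          linarith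
        exact this.trans (by simp only [hB]; linarith)
      · have : G s - ⟪gradient f x, w⟫ ≤ c * s * ‖w‖ ^ 2 + min (2 * L * ‖w‖) (c * e ^ 2 / s) := by
          rw [min_eq_right hle]; exact hB2
        exact this.trans (by simp only [hB]; linarith)
  -- integrate
  have hconst : IntervalIntegrable (fun _ : ℝ => ⟪gradient f x, w⟫) MeasureTheory.volume 0 1 :=
    intervalIntegrable_const
  have hmono : ∫ s in (0:ℝ)..1, (G s - ⟪gradient f x, w⟫)  ≤ ∫ s in (0:ℝ)..1, B s :=
    intervalIntegral.integral_mono_on zero_le_one (hGint.sub hconst) hBint hpt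
  have hlhs : ∫ s in (0:ℝ)..1, (G s - ⟪gradient f x, w⟫) = (g 1 - g 0) - ⟪gradient f x, w⟫ := by
    rw [intervalIntegral.integral_sub hGint hconst, hFTC, intervalIntegral.integral_const]
    simp
  have hrhs : ∫ s in (0:ℝ)..1, B s
      = c / 2 * ‖w‖ ^ 2 + 2 * Real.sqrt (2 * L * c) * |e| := by
    have e1 : ∫ s in (0:ℝ)..1, c * s * ‖w‖ ^ 2 = c / 2 * ‖w‖ ^ 2 := by
      have : (fun s : ℝ => c * s * ‖w‖ ^ 2) = fun s : ℝ => (c * ‖w‖ ^ 2) * s := by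
        funext s; ring
      rw [this, intervalIntegral.integral_const_mul, integral_id]
      ring
    have e2 : ∫ s in (0:ℝ)..1, Real.sqrt (2 * L * c) * |e| * s ^ (-(1/2) : ℝ)
        = 2 * Real.sqrt (2 * L * c) * |e| := by
      rw [intervalIntegral.integral_const_mul, integral_rpow (Or.inl (by norm_num))]
      rw [Real.one_rpow, Real.zero_rpow (by norm_num : (-(1/2):ℝ) + 1 ≠ 0)]
      ring
    calc ∫ s in (0:ℝ)..1, B s
        = (∫ s in (0:ℝ)..1, c * s * ‖w‖ ^ 2)
          + ∫ s in (0:ℝ)..1, Real.sqrt (2 * L * c) * |e| * s ^ (-(1/2) : ℝ) := by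
          rw [← intervalIntegral.integral_add
            (Continuous.intervalIntegrable (by fun_prop) 0 1)
            ((intervalIntegral.intervalIntegrable_rpow' (by norm_num)).const_mul _)]
      _ = c / 2 * ‖w‖ ^ 2 + 2 * Real.sqrt (2 * L * c) * |e| := by rw [e1, e2]
  have hg1 : g 1 = f (x + w) := by simp [hg]
  have hg0 : g 0 = f x := by simp [hg]
  rw [hlhs, hrhs, hg1, hg0] at hmono
  linarith

lemma auxKey {d : ℕ} {c : ℝ} (hc : 0 < c) (v : EuclideanSpace ℝ (Fin d) → ℝ)
    (hv : Differentiable ℝ v) (x₀ : EuclideanSpace ℝ (Fin d)) {ε : ℝ} (hε : 0 < ε) :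
    ∃ δ : ℝ, 0 < δ ∧ ∃ γ : ℝ, 0 < γ ∧ ∀ y q : EuclideanSpace ℝ (Fin d), ‖y - x₀‖ ≤ δ →
      (∀ z : EuclideanSpace ℝ (Fin d), ‖z - y‖ ≤ 1 →
        v z ≤ v y + ⟪q, z - y⟫ + c / 2 * ‖z - y‖ ^ 2 + γ) →
      ‖gradient v x₀ - q‖ ≤ ε := by
  set g := gradient v x₀ with hgdef
  have hfg : ∀ u : EuclideanSpace ℝ (Fin d), (fderiv ℝ v x₀) u = ⟪g, u⟫ := by
    intro u
    rw [hgdef]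
    simp only [gradient]
    exact (InnerProductSpace.toDual_symm_apply).symm
  have hev := ((hv x₀).hasFDerivAt).isLittleO.def (show (0:ℝ) < ε/8 by positivity)
  rw [Metric.eventually_nhds_iff] at hev
  obtain ⟨δ₀, hδ₀, hball⟩ := hev
  set t := min (δ₀/2) (min (ε/(4*c)) 1) with htdef
  have ht0 : 0 < t := lt_min (by positivity) (lt_min (by positivity) one_pos)
  have ht1 : t ≤ 1 := le_trans (min_le_right _ _) (min_le_right _ _)
  have htδ : t ≤ δ₀/2 := min_le_left _ _
  have htε : t ≤ ε/(4*c) := le_trans (min_le_right _ _) (min_le_left _ _)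
  refine ⟨t/2, by positivity, t * (ε/4), by positivity, fun y q hy hq => ?_⟩
  rcases eq_or_ne g q with h | h
  · rw [h, sub_self, norm_zero]; exact hε.le
  · have hgq : 0 < ‖g - q‖ := norm_sub_pos_iff.2 h
    set u := ‖g - q‖⁻¹ • (g - q) with hu
    set z := y + t • u with hz
    have hzy : z - y = t • u := by rw [hz]; abel
    have hznorm : ‖z - y‖ = t := by
      rw [hzy, norm_smul, norm_smul, Real.norm_eq_abs, abs_of_pos ht0, Real.norm_eq_abs,
        abs_of_pos (inv_pos.2 hgq)]
      field_simp
    have hyx : dist y x₀ < δ₀ := by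
      rw [dist_eq_norm]
      calc ‖y - x₀‖ ≤ t/2 := hy
        _ < δ₀ := by linarith
    have hzx : dist z x₀ < δ₀ := by
      rw [dist_eq_norm]
      calc ‖z - x₀‖ = ‖(z - y) + (y - x₀)‖ := by abel_nf
        _ ≤ ‖z - y‖ + ‖y - x₀‖ := norm_add_le _ _
        _ ≤ t + t/2 := by rw [hznorm]; linarith
        _ < δ₀ := by linarith
    have hzxn : ‖z - x₀‖ ≤ 2 * t := by
      calc ‖z - x₀‖ = ‖(z - y) + (y - x₀)‖ := by abel_nf
        _ ≤ ‖z - y‖ + ‖y - x₀‖ := norm_add_le _ _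
        _ ≤ t + t/2 := by rw [hznorm]; linarith
        _ ≤ 2 * t := by linarith
    have hAz := hball hzx
    have hAy := hball hyx
    rw [Real.norm_eq_abs] at hAz hAy
    rw [hfg] at hAz hAy
    have hAz' : v z ≥ v x₀ + ⟪g, z - x₀⟫ - ε/8 * (2*t) := by
      have h1 := (abs_le.1 hAz).1
      have h2 : ε/8 * ‖z - x₀‖ ≤ ε/8 * (2*t) := by gcongr
      linarith
    have hAy' : v y ≤ v x₀ + ⟪g, y - x₀⟫ + ε/8 * (t/2) := by
      have h1 := (abs_le.1 hAy).2
      have h2 : ε/8 * ‖y - x₀‖ ≤ ε/8 * (t/2) := by gcongr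
      linarith
    have hq' := hq z (by rw [hznorm]; exact ht1)
    rw [hznorm] at hq'
    have hsplit : ⟪g, z - x₀⟫ = ⟪g, y - x₀⟫ + ⟪g, z - y⟫ := by
      rw [← inner_add_right]
      congr 1
      abel
    have hip : ⟪g, z - y⟫ - ⟪q, z - y⟫ = t * ‖g - q‖ := by
      rw [← inner_sub_left, hzy, real_inner_smul_right, hu, real_inner_smul_right,
        real_inner_self_eq_norm_sq]
      field_simp
    have hcc : c / 2 * t ^ 2 ≤ ε/8 * t := by
      have : c / 2 * t ≤ ε / 8 := by
        calc c / 2 * t ≤ c / 2 * (ε/(4*c)) := by gcongr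
          _ = ε/8 := by field_simp; ring
      calc c / 2 * t ^ 2 = (c / 2 * t) * t := by ring
        _ ≤ ε/8 * t := by gcongr
    have key : t * ‖g - q‖ ≤ t * ε := by nlinarith [hAz', hAy', hq', hsplit, hip, hcc]
    exact le_of_mul_le_mul_left key ht0


/-- Locally uniformly convergent, uniformly Lipschitz, weakly semiconcave functions have
gradients converging uniformly on compact sets to the gradient of the (semiconcave)
limit. -/
theorem stmt18 (d : ℕ) (L c : ℝ) (hc : 0 < c)
    (vn : ℕ → EuclideanSpace ℝ (Fin d) → ℝ)
    (v : EuclideanSpace ℝ (Fin d) → ℝ)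
    (hvn : ∀ n, Differentiable ℝ (vn n))
    (hv : Differentiable ℝ v)
    (hLip : ∀ n x, ‖gradient (vn n) x‖ ≤ L)
    (hconv : TendstoLocallyUniformly vn v atTop)
    (η : ℕ → ℝ) (hη : Tendsto η atTop (nhds 0))
    (hsc : ∀ n (x y : EuclideanSpace ℝ (Fin d)),
      ⟪gradient (vn n) y - gradient (vn n) x, y - x⟫ ≤ c * (‖y - x‖ ^ 2 + η n ^ 2))
    (hvsc : ∀ x y : EuclideanSpace ℝ (Fin d),
      v y ≤ v x + ⟪gradient v x, y - x⟫ + (c / 2) * ‖y - x‖ ^ 2) :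
    ∀ K : Set (EuclideanSpace ℝ (Fin d)), IsCompact K →
      TendstoUniformlyOn (fun n x => gradient (vn n) x) (gradient v) atTop K := by
  intro K hK
  have hL0 : 0 ≤ L := le_trans (norm_nonneg _) (hLip 0 0)
  set K₁ := Metric.cthickening 1 K with hK₁def
  have hK₁ : IsCompact K₁ := hK.cthickening
  have hU : TendstoUniformlyOn vn v atTop K₁ :=
    (tendstoLocallyUniformlyOn_iff_tendstoUniformlyOn_of_compact hK₁).1
      ((tendstoLocallyUniformlyOn_univ.2 hconv).mono (Set.subset_univ _))
  rw [Metric.tendstoUniformlyOn_iff]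
  intro ε hε
  -- finite subcover from auxKey with ε/3
  have H : ∀ x₀ : EuclideanSpace ℝ (Fin d), ∃ δ : ℝ, 0 < δ ∧ ∃ γ : ℝ, 0 < γ ∧
      ∀ y q : EuclideanSpace ℝ (Fin d), ‖y - x₀‖ ≤ δ →
      (∀ z : EuclideanSpace ℝ (Fin d), ‖z - y‖ ≤ 1 →
        v z ≤ v y + ⟪q, z - y⟫ + c / 2 * ‖z - y‖ ^ 2 + γ) →
      ‖gradient v x₀ - q‖ ≤ ε/3 :=
    fun x₀ => auxKey hc v hv x₀ (by positivity)
  choose δf hδf γf hγf hkey using H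
  obtain ⟨S, hS⟩ := hK.elim_finite_subcover (fun x₀ => Metric.ball x₀ (δf x₀))
    (fun _ => Metric.isOpen_ball)
    (fun x hx => Set.mem_iUnion.2 ⟨x, Metric.mem_ball_self (hδf x)⟩)
  by_cases hSne : S.Nonempty
  swap
  · -- K is empty
    rw [Finset.not_nonempty_iff_eq_empty] at hSne
    subst hSne
    simp only [Finset.notMem_empty, Set.iUnion_of_empty, Set.iUnion_empty,
      Set.subset_empty_iff] at hS
    filter_upwards with n x hx
    rw [hS] at hx
    exact absurd hx (Set.notMem_empty x)
  set γstar := S.inf' hSne γf with hγstar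
  have hγstar0 : 0 < γstar := by
    rw [hγstar, Finset.lt_inf'_iff]
    exact fun i _ => hγf i
  have hδ : ∀ᶠ n in atTop, ∀ y ∈ K₁, dist (v y) (vn n y) < γstar / 4 :=
    (Metric.tendstoUniformlyOn_iff.1 hU) _ (by positivity)
  have hεn : ∀ᶠ n in atTop, 2 * Real.sqrt (2 * L * c) * |η n| < γstar / 2 := by
    have h0 : Tendsto (fun n => 2 * Real.sqrt (2 * L * c) * |η n|) atTop (nhds 0) := by
      have h1 := hη.abs
      simpa using h1.const_mul (2 * Real.sqrt (2 * L * c))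
    exact h0.eventually_lt_const (by positivity)
  filter_upwards [hδ, hεn] with n hn1 hn2
  intro x hx
  obtain ⟨x₀, hx₀⟩ := Set.mem_iUnion.1 (hS hx)
  simp only [Set.mem_iUnion, exists_prop] at hx₀
  obtain ⟨hx₀S, hx₀ball⟩ := hx₀
  have hxx₀ : ‖x - x₀‖ ≤ δf x₀ := by
    rw [Metric.mem_ball, dist_eq_norm] at hx₀ball
    exact hx₀ball.le
  have hγle : γstar ≤ γf x₀ := Finset.inf'_le _ hx₀S
  have hxK₁ : x ∈ K₁ := Metric.self_subset_cthickening K hx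
  -- approximate superdifferential property for q = gradient (vn n) x
  have hsup : ∀ z : EuclideanSpace ℝ (Fin d), ‖z - x‖ ≤ 1 →
      v z ≤ v x + ⟪gradient (vn n) x, z - x⟫ + c / 2 * ‖z - x‖ ^ 2 + γf x₀ := by
    intro z hz
    have hzK₁ : z ∈ K₁ :=
      Metric.mem_cthickening_of_dist_le z x 1 K hx (by rw [dist_eq_norm]; exact hz)
    have hA := auxA hc hL0 (vn n) (hvn n) (hLip n) (η n) (fun a b => hsc n a b) x (z - x) hz
    rw [add_sub_cancel] at hA
    have d1 := hn1 x hxK₁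
    have d2 := hn1 z hzK₁
    rw [Real.dist_eq] at d1 d2
    have d1' := (abs_lt.1 d1).1
    have d2' := (abs_lt.1 d2).2
    have : 2 * Real.sqrt (2 * L * c) * |η n| < γstar / 2 := hn2
    linarith
  have h1 : ‖gradient v x₀ - gradient (vn n) x‖ ≤ ε/3 := hkey x₀ x _ hxx₀ hsup
  -- exact superdifferential property for q = gradient v x
  have hsup2 : ∀ z : EuclideanSpace ℝ (Fin d), ‖z - x‖ ≤ 1 →
      v z ≤ v x + ⟪gradient v x, z - x⟫ + c / 2 * ‖z - x‖ ^ 2 + γf x₀ := by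
    intro z _
    have := hvsc x z
    linarith [hγf x₀]
  have h2 : ‖gradient v x₀ - gradient v x‖ ≤ ε/3 := hkey x₀ x _ hxx₀ hsup2
  rw [dist_eq_norm]
  calc ‖gradient v x - gradient (vn n) x‖
      = ‖(gradient v x - gradient v x₀) + (gradient v x₀ - gradient (vn n) x)‖ := by abel_nf
    _ ≤ ‖gradient v x - gradient v x₀‖ + ‖gradient v x₀ - gradient (vn n) x‖ := norm_add_le _ _
    _ ≤ ε/3 + ε/3 := by
        refine add_le_add ?_ h1
        rw [norm_sub_rev]
        exact h2
    _ < ε := by linarith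
end
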